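/- arXiv:0705.0698 — 3 statements merged into one kernel-verified Lean document; each statement's English description precedes it below -/
import Mathlib

section
/- If r, s, u, v are positive integers and q > 1 is real, then 1/([u]_q^r [v]_q^s) = Σ_{a=0}^{r-1} Σ_{b=0}^{r-1-a} C(a+s-1; a, b) (1-q)^b q^{(s-1-b)u + a v} / ([u]_q^{r-a-b} [u+v]_q^{s+a}) + Σ_{a=0}^{s-1} Σ_{b=0}^{s-1-a} C(a+r-1; a, b) (1-q)^b q^{a u + (r-1-b)v} / ([v]_q^{s-a-b} [u+v]_q^{r+a}) − Σ_{j=1}^{min(r,s)} C(r+s-j-1; r-j, s-j) (1-q)^j q^{(s-j)u + (r-j)v} / [u+v]_q^{r+s-j}. -/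
open Finset

/-- The q-analog of a natural number: `[n]_q = (q^n - 1)/(q - 1)`. -/
noncomputable def qa (q : ℝ) (n : ℕ) : ℝ := (q ^ n - 1) / (q - 1)

noncomputable def S1x (x y : ℝ) (r s : ℕ) : ℝ :=
  ∑ a ∈ range r, ∑ b ∈ range (r - a),
    ((a + s - 1).choose a * (s - 1).choose b : ℝ) * (-1)^b * x^(s-1-b) * y^a /
      ((x-1)^(r-a-b) * (x*y-1)^(s+a))

noncomputable def TT (x y : ℝ) (r s a b : ℕ) (c : ℝ) : ℝ :=
  c * ((-1)^b * x^(s+1-b) * y^a / ((x-1)^(r+2-a-b) * (x*y-1)^(s+1+a)))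

noncomputable def dd (s : ℕ) : ℕ → ℕ → ℝ
  | 0, _ => 0
  | (a+1), b => ((a+1+s).choose a : ℝ) * ((s+1).choose b : ℝ)

noncomputable def ee (s : ℕ) : ℕ → ℕ → ℝ
  | _, 0 => 0
  | a, (b+1) => -(((a+s).choose a : ℝ) * ((s).choose b : ℝ))

lemma coeff1 (s a b : ℕ) :
    ((a+s+1).choose a : ℝ) * ((s+1).choose b : ℝ)
      = dd s a b + ((a+s).choose a : ℝ) * ((s).choose b : ℝ) - ee s a b := by
  rcases a with _|a <;> rcases b with _|b <;>
    simp [dd, ee, Nat.choose_succ_succ] <;> ring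

lemma D1 (x y : ℝ) (hx : x - 1 ≠ 0) (hxy : x*y - 1 ≠ 0) (r s : ℕ) :
    (x*y-1) * S1x x y (r+2) (s+2) =
      y * S1x x y (r+1) (s+2) + x * S1x x y (r+2) (s+1) - S1x x y (r+1) (s+1) := by
  have h1 : (x*y-1) * S1x x y (r+2) (s+2)
      = ∑ a ∈ range (r+2), ∑ b ∈ range (r+2-a),
          TT x y r s a b (((a+s+1).choose a : ℝ) * ((s+1).choose b : ℝ)) := by
    rw [S1x, mul_sum]
    refine sum_congr rfl fun a ha => ?_
    rw [mul_sum]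
    refine sum_congr rfl fun b hb => ?_
    simp only [TT]
    rw [show a + (s+2) - 1 = a+s+1 by omega, show (s+2) - 1 = s+1 by omega,
        show (s+2)+a = (s+1+a)+1 by omega, pow_succ]
    have hp1 : (x-1)^(r+2-a-b) ≠ 0 := pow_ne_zero _ hx
    have hp2 : (x*y-1)^(s+1+a) ≠ 0 := pow_ne_zero _ hxy
    field_simp
  have h2 : x * S1x x y (r+2) (s+1)
      = ∑ a ∈ range (r+2), ∑ b ∈ range (r+2-a),
          TT x y r s a b (((a+s).choose a : ℝ) * ((s).choose b : ℝ)) := by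
    rw [S1x, mul_sum]
    refine sum_congr rfl fun a ha => ?_
    rw [mul_sum]
    refine sum_congr rfl fun b hb => ?_
    simp only [TT]
    rw [show a + (s+1) - 1 = a+s by omega, show (s+1) - 1 = s by omega]
    by_cases hbs : b ≤ s
    · rw [show s+1-b = (s-b)+1 by omega, pow_succ]
      ring
    · rw [Nat.choose_eq_zero_of_lt (by omega : s < b)]
      push_cast
      ring
  have h3 : y * S1x x y (r+1) (s+2)
      = ∑ a ∈ range (r+2), ∑ b ∈ range (r+2-a), TT x y r s a b (dd s a b) := by
    rw [sum_range_succ']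
    have h0 : ∑ b ∈ range (r+2-0), TT x y r s 0 b (dd s 0 b) = 0 := by
      simp [dd, TT]
    rw [h0, add_zero, S1x, mul_sum]
    refine sum_congr rfl fun a ha => ?_
    rw [show r+2-(a+1) = r+1-a by omega, mul_sum]
    refine sum_congr rfl fun b hb => ?_
    simp only [TT, dd]
    rw [show a + (s+2) - 1 = a+1+s by omega, show (s+2) - 1 = s+1 by omega,
        show r+2-(a+1)-b = r+1-a-b by omega,
        show s+1+(a+1) = s+2+a by omega, pow_succ]
    ring
  have h4 : S1x x y (r+1) (s+1)
      = ∑ a ∈ range (r+2), ∑ b ∈ range (r+2-a), TT x y r s a b (ee s a b) := by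
    rw [sum_range_succ]
    have h0 : ∑ b ∈ range (r+2-(r+1)), TT x y r s (r+1) b (ee s (r+1) b) = 0 := by
      rw [show r+2-(r+1) = 1 by omega]
      simp [ee, TT]
    rw [h0, add_zero, S1x]
    refine sum_congr rfl fun a ha => ?_
    have ha' : a ≤ r := by
      have := mem_range.mp ha; omega
    rw [show r+2-a = (r+1-a)+1 by omega, sum_range_succ']
    have h0' : TT x y r s a 0 (ee s a 0) = 0 := by simp [ee, TT]
    rw [h0', add_zero]
    refine sum_congr rfl fun b hb => ?_
    simp only [TT, ee]
    rw [show a + (s+1) - 1 = a+s by omega, show (s+1) - 1 = s by omega,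
        show s+1-(b+1) = s-b by omega,
        show r+2-a-(b+1) = r+1-a-b by omega]
    ring
  rw [h1, h2, h3, h4, ← sum_add_distrib, ← sum_sub_distrib]
  refine sum_congr rfl fun a ha => ?_
  rw [← sum_add_distrib, ← sum_sub_distrib]
  refine sum_congr rfl fun b hb => ?_
  simp only [TT]
  rw [show (((a+s+1).choose a : ℝ) * ((s+1).choose b : ℝ)) = dd s a b + ((a+s).choose a : ℝ) * ((s).choose b : ℝ) - ee s a b from coeff1 s a b]
  ring

noncomputable def T3x (x y : ℝ) (r s : ℕ) : ℝ :=
  ∑ i ∈ range (min r s),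
    ((r+s-i-2).choose (r-i-1) * (s-1).choose (s-i-1) : ℝ) * (-1)^(i+1) * x^(s-i-1) *
      y^(r-i-1) / (x*y-1)^(r+s-i-1)

noncomputable def TJ (x y : ℝ) (r s i : ℕ) (c : ℝ) : ℝ :=
  c * ((-1)^(i+1) * x^(s+1-i) * y^(r+1-i) / (x*y-1)^(r+s+2-i))

noncomputable def gg (r s : ℕ) : ℕ → ℝ
  | 0 => 0
  | (i+1) => ((r+s-i).choose (r-i) : ℝ) * ((s).choose (s-i) : ℝ)

noncomputable def cL (r s i : ℕ) : ℝ := ((r+s+2-i).choose (r+1-i) : ℝ) * ((s+1).choose (s+1-i) : ℝ)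
noncomputable def cY (r s i : ℕ) : ℝ := ((r+s+1-i).choose (r-i) : ℝ) * ((s+1).choose (s+1-i) : ℝ)
noncomputable def cX (r s i : ℕ) : ℝ := ((r+s+1-i).choose (r+1-i) : ℝ) * ((s).choose (s-i) : ℝ)

lemma cpt (r s i : ℕ) (hir : i ≤ r) (his : i ≤ s) :
    cL r s i = cY r s i + cX r s i + gg r s i := by
  rcases i with _|i
  · simp [cL, cY, cX, gg, Nat.choose_succ_succ, Nat.choose_self, Nat.choose_succ_self]
  · simp only [cL, cY, cX, gg]
    rw [show r+s+2-(i+1) = (r+s+1-(i+1))+1 by omega,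
        show r+1-(i+1) = (r-(i+1))+1 by omega,
        show s+1-(i+1) = (s-(i+1))+1 by omega,
        show r+s-i = r+s+1-(i+1) by omega,
        show r-i = (r-(i+1))+1 by omega,
        show s-i = (s-(i+1))+1 by omega,
        Nat.choose_succ_succ' (r+s+1-(i+1)) (r-(i+1)),
        Nat.choose_succ_succ' s (s-(i+1))]
    push_cast
    ring

lemma topLT (r s : ℕ) (h : r < s) :
    cL r s (r+1) = cX r s (r+1) + gg r s (r+1) := by
  simp only [cL, cX, gg]
  rw [show r+s+2-(r+1) = s+1 by omega, show r+1-(r+1) = 0 by omega,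
      show r+s+1-(r+1) = s by omega, show s-(r+1) = s-r-1 by omega,
      show r+s-r = s by omega, show r-r = 0 by omega,
      show s+1-(r+1) = s-r by omega, show s-r = (s-r-1)+1 by omega,
      Nat.choose_succ_succ' s (s-r-1)]
  push_cast [Nat.choose_zero_right]
  ring

lemma topEQ (r : ℕ) : cL r r (r+1) = gg r r (r+1) := by
  simp only [cL, gg]
  rw [show r+r+2-(r+1) = r+1 by omega, show r+1-(r+1) = 0 by omega,
      show r+r-r = r by omega, show r-r = 0 by omega]
  simp

lemma topGT (r s : ℕ) (h : s < r) :
    cL r s (s+1) = cY r s (s+1) + gg r s (s+1) := by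
  simp only [cL, cY, gg]
  rw [show s+1-(s+1) = 0 by omega, show r+s+2-(s+1) = r+1 by omega,
      show r+s+1-(s+1) = r by omega, show r+s-s = r by omega, show s-s = 0 by omega,
      show r+1-(s+1) = (r-(s+1))+1 by omega,
      show r-s = (r-(s+1))+1 by omega,
      Nat.choose_succ_succ' r (r-(s+1))]
  push_cast [Nat.choose_zero_right]
  ring

lemma D3 (x y : ℝ) (hxy : x*y - 1 ≠ 0) (r s : ℕ) :
    (x*y-1) * T3x x y (r+2) (s+2) =
      y * T3x x y (r+1) (s+2) + x * T3x x y (r+2) (s+1) - T3x x y (r+1) (s+1) := by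
  have hL : (x*y-1) * T3x x y (r+2) (s+2)
      = ∑ i ∈ range (min r s + 2), TJ x y r s i (cL r s i) := by
    rw [T3x, show min (r+2) (s+2) = min r s + 2 by omega, mul_sum]
    refine sum_congr rfl fun i hi => ?_
    have hi' : i < min r s + 2 := mem_range.mp hi
    simp only [TJ, cL]
    rw [show r+2+(s+2)-i-2 = r+s+2-i by omega, show r+2-i-1 = r+1-i by omega,
        show (s+2)-1 = s+1 by omega, show s+2-i-1 = s+1-i by omega,
        show r+2+(s+2)-i-1 = (r+s+2-i)+1 by omega, pow_succ]
    have hp2 : (x*y-1)^(r+s+2-i) ≠ 0 := pow_ne_zero _ hxy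
    field_simp
    ring
  have hY : y * T3x x y (r+1) (s+2)
      = ∑ i ∈ range (min (r+1) (s+2)), TJ x y r s i (cY r s i) := by
    rw [T3x, mul_sum]
    refine sum_congr rfl fun i hi => ?_
    have hi' : i < min (r+1) (s+2) := mem_range.mp hi
    simp only [TJ, cY]
    rw [show r+1+(s+2)-i-2 = r+s+1-i by omega, show r+1-i-1 = r-i by omega,
        show (s+2)-1 = s+1 by omega, show s+2-i-1 = s+1-i by omega,
        show r+1+(s+2)-i-1 = r+s+2-i by omega,
        show r+1-i = (r-i)+1 by omega, pow_succ]
    ring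
  have hX : x * T3x x y (r+2) (s+1)
      = ∑ i ∈ range (min (r+2) (s+1)), TJ x y r s i (cX r s i) := by
    rw [T3x, mul_sum]
    refine sum_congr rfl fun i hi => ?_
    have hi' : i < min (r+2) (s+1) := mem_range.mp hi
    simp only [TJ, cX]
    rw [show r+2+(s+1)-i-2 = r+s+1-i by omega, show r+2-i-1 = r+1-i by omega,
        show (s+1)-1 = s by omega, show s+1-i-1 = s-i by omega,
        show r+2+(s+1)-i-1 = r+s+2-i by omega,
        show s+1-i = (s-i)+1 by omega, pow_succ]
    ring
  have hD : T3x x y (r+1) (s+1)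
      = -∑ i ∈ range (min r s + 2), TJ x y r s i (gg r s i) := by
    rw [sum_range_succ']
    have h0 : TJ x y r s 0 (gg r s 0) = 0 := by simp [gg, TJ]
    rw [h0, add_zero, T3x, show min (r+1) (s+1) = min r s + 1 by omega, ← Finset.sum_neg_distrib]
    refine sum_congr rfl fun i hi => ?_
    have hi' : i < min r s + 1 := mem_range.mp hi
    simp only [TJ, gg]
    rw [show r+1+(s+1)-i-2 = r+s-i by omega, show r+1-i-1 = r-i by omega,
        show (s+1)-1 = s by omega, show s+1-i-1 = s-i by omega,
        show r+1+(s+1)-i-1 = r+s+1-i by omega,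
        show s+1-(i+1) = s-i by omega, show r+1-(i+1) = r-i by omega,
        show r+s+2-(i+1) = r+s+1-i by omega]
    ring
  rw [hL, hY, hX, hD, sub_neg_eq_add]
  rcases Nat.lt_trichotomy r s with h | h | h
  · rw [show min r s = r by omega, show min (r+1) (s+2) = r+1 by omega,
        show min (r+2) (s+1) = r+2 by omega]
    have key : ∑ i ∈ range (r+2),
        (TJ x y r s i (cL r s i) - TJ x y r s i (cX r s i) - TJ x y r s i (gg r s i))
        = ∑ i ∈ range (r+1), TJ x y r s i (cY r s i) := by
      rw [sum_range_succ]
      have htop : TJ x y r s (r+1) (cL r s (r+1)) - TJ x y r s (r+1) (cX r s (r+1))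
          - TJ x y r s (r+1) (gg r s (r+1)) = 0 := by
        rw [topLT r s h]
        simp only [TJ]
        ring
      rw [htop, add_zero]
      refine sum_congr rfl fun i hi => ?_
      have hi' : i < r + 1 := mem_range.mp hi
      rw [cpt r s i (by omega) (by omega)]
      simp only [TJ]
      ring
    have expand : ∑ i ∈ range (r+2),
        (TJ x y r s i (cL r s i) - TJ x y r s i (cX r s i) - TJ x y r s i (gg r s i))
        = (∑ i ∈ range (r+2), TJ x y r s i (cL r s i))
          - (∑ i ∈ range (r+2), TJ x y r s i (cX r s i))
          - (∑ i ∈ range (r+2), TJ x y r s i (gg r s i)) := by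
      rw [sum_sub_distrib, sum_sub_distrib]
    linarith [key, expand]
  · subst h
    rw [show min r r = r by omega, show min (r+1) (r+2) = r+1 by omega,
        show min (r+2) (r+1) = r+1 by omega]
    have key : ∑ i ∈ range (r+2),
        (TJ x y r r i (cL r r i) - TJ x y r r i (gg r r i))
        = ∑ i ∈ range (r+1), (TJ x y r r i (cY r r i) + TJ x y r r i (cX r r i)) := by
      rw [sum_range_succ]
      have htop : TJ x y r r (r+1) (cL r r (r+1)) - TJ x y r r (r+1) (gg r r (r+1)) = 0 := by
        rw [topEQ r]
        ring
      rw [htop, add_zero]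
      refine sum_congr rfl fun i hi => ?_
      have hi' : i < r + 1 := mem_range.mp hi
      rw [cpt r r i (by omega) (by omega)]
      simp only [TJ]
      ring
    have expand : ∑ i ∈ range (r+2),
        (TJ x y r r i (cL r r i) - TJ x y r r i (gg r r i))
        = (∑ i ∈ range (r+2), TJ x y r r i (cL r r i))
          - (∑ i ∈ range (r+2), TJ x y r r i (gg r r i)) := by
      rw [sum_sub_distrib]
    have expand2 : ∑ i ∈ range (r+1), (TJ x y r r i (cY r r i) + TJ x y r r i (cX r r i))
        = (∑ i ∈ range (r+1), TJ x y r r i (cY r r i))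
          + (∑ i ∈ range (r+1), TJ x y r r i (cX r r i)) := by
      rw [sum_add_distrib]
    linarith [key, expand, expand2]
  · rw [show min r s = s by omega, show min (r+1) (s+2) = s+2 by omega,
        show min (r+2) (s+1) = s+1 by omega]
    have key : ∑ i ∈ range (s+2),
        (TJ x y r s i (cL r s i) - TJ x y r s i (cY r s i) - TJ x y r s i (gg r s i))
        = ∑ i ∈ range (s+1), TJ x y r s i (cX r s i) := by
      rw [sum_range_succ]
      have htop : TJ x y r s (s+1) (cL r s (s+1)) - TJ x y r s (s+1) (cY r s (s+1))
          - TJ x y r s (s+1) (gg r s (s+1)) = 0 := by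
        rw [topGT r s h]
        simp only [TJ]
        ring
      rw [htop, add_zero]
      refine sum_congr rfl fun i hi => ?_
      have hi' : i < s + 1 := mem_range.mp hi
      rw [cpt r s i (by omega) (by omega)]
      simp only [TJ]
      ring
    have expand : ∑ i ∈ range (s+2),
        (TJ x y r s i (cL r s i) - TJ x y r s i (cY r s i) - TJ x y r s i (gg r s i))
        = (∑ i ∈ range (s+2), TJ x y r s i (cL r s i))
          - (∑ i ∈ range (s+2), TJ x y r s i (cY r s i))
          - (∑ i ∈ range (s+2), TJ x y r s i (gg r s i)) := by
      rw [sum_sub_distrib, sum_sub_distrib]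
    linarith [key, expand]

lemma tel (x y : ℝ) (hx : x - 1 ≠ 0) (hy : y - 1 ≠ 0) (hxy : x*y - 1 ≠ 0) (s : ℕ) :
    ∑ a ∈ range s, x^a / ((y-1)^(s-a) * (x*y-1)^(1+a))
      = (1/(y-1)^s - x^s/(x*y-1)^s) / (x-1) := by
  induction s with
  | zero => simp
  | succ n ih =>
    rw [sum_range_succ]
    have step : ∀ a ∈ range n, x^a / ((y-1)^(n+1-a) * (x*y-1)^(1+a))
        = x^a / ((y-1)^(n-a) * (x*y-1)^(1+a)) / (y-1) := by
      intro a ha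
      have ha' : a < n := mem_range.mp ha
      rw [show n+1-a = (n-a)+1 by omega, pow_succ, div_div]
      congr 1
      ring
    rw [sum_congr rfl step, ← sum_div, ih, show n+1-n = 1 by omega, pow_one]
    have h1 : (y-1)^n ≠ 0 := pow_ne_zero _ hy
    have h2 : (x*y-1)^n ≠ 0 := pow_ne_zero _ hxy
    generalize hw : x*y - 1 = w at *
    field_simp
    subst hw
    ring

lemma edge (x y : ℝ) (hx : x - 1 ≠ 0) (hy : y - 1 ≠ 0) (hxy : x*y - 1 ≠ 0) (s : ℕ) :
    S1x x y 1 (s+1) + S1x y x (s+1) 1 - T3x x y 1 (s+1)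
      = 1 / ((x-1)^1 * (y-1)^(s+1)) := by
  have e1 : S1x x y 1 (s+1) = x^s / ((x-1) * (x*y-1)^(s+1)) := by
    rw [S1x]
    simp
  have e2 : S1x y x (s+1) 1 = (1/(y-1)^(s+1) - x^(s+1)/(x*y-1)^(s+1)) / (x-1) := by
    rw [S1x, ← tel x y hx hy hxy (s+1)]
    refine sum_congr rfl fun a ha => ?_
    have ha' : a < s+1 := mem_range.mp ha
    rw [Finset.sum_eq_single_of_mem 0 (mem_range.mpr (by omega))]
    · simp [mul_comm y x]
    · intro b hb hb0
      rw [Nat.choose_eq_zero_of_lt (by omega : (1:ℕ)-1 < b)]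
      simp
  have e3 : T3x x y 1 (s+1) = -(x^s/(x*y-1)^(s+1)) := by
    rw [T3x, show min 1 (s+1) = 1 by omega, sum_range_one]
    norm_num [neg_div]
  rw [e1, e2, e3]
  have h1 : (y-1)^(s+1) ≠ 0 := pow_ne_zero _ hy
  have h2 : (x*y-1)^(s+1) ≠ 0 := pow_ne_zero _ hxy
  field_simp
  ring

lemma main_xy (x y : ℝ) (hx : x - 1 ≠ 0) (hy : y - 1 ≠ 0) (hxy : x*y - 1 ≠ 0) :
    ∀ n r s : ℕ, r + s = n → 0 < r → 0 < s →
      S1x x y r s + S1x y x s r - T3x x y r s = 1 / ((x-1)^r * (y-1)^s) := by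
  intro n
  induction n using Nat.strong_induction_on with
  | _ n ih =>
  intro r s hn hr hs
  rcases r with _|_|r'
  · omega
  · -- r = 1
    obtain ⟨s', rfl⟩ : ∃ s', s = s'+1 := ⟨s-1, by omega⟩
    exact edge x y hx hy hxy s'
  · rcases s with _|_|s'
    · omega
    · -- s = 1
      have hyx : y*x - 1 ≠ 0 := by rwa [mul_comm]
      have h := edge y x hy hx hyx (r'+1)
      have hT : T3x x y (r'+2) 1 = T3x y x 1 (r'+2) := by
        rw [T3x, T3x, show min (r'+2) 1 = 1 by omega, show min 1 (r'+2) = 1 by omega,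
            sum_range_one, sum_range_one]
        norm_num [mul_comm y x]
        rw [show r'+2+1-2 = r'+1 by omega, Nat.choose_self]
        norm_num
      rw [hT]
      linear_combination h
    · -- r,s ≥ 2
      have hyx : y*x - 1 ≠ 0 := by rwa [mul_comm]
      have E1 := D1 x y hx hxy r' s'
      have E2 := D1 y x hy hyx s' r'
      have E3 := D3 x y hxy r' s'
      rw [mul_comm y x] at E2
      have I1 := ih (n-1) (by omega) (r'+1) (s'+2) (by omega) (by omega) (by omega)
      have I2 := ih (n-1) (by omega) (r'+2) (s'+1) (by omega) (by omega) (by omega)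
      have I3 := ih (n-2) (by omega) (r'+1) (s'+1) (by omega) (by omega) (by omega)
      have h1 : (x-1)^(r'+1) ≠ 0 := pow_ne_zero _ hx
      have h2 : (y-1)^(s'+1) ≠ 0 := pow_ne_zero _ hy
      have alg : y * (1/((x-1)^(r'+1)*(y-1)^(s'+2))) + x * (1/((x-1)^(r'+2)*(y-1)^(s'+1)))
          - 1/((x-1)^(r'+1)*(y-1)^(s'+1))
          = (x*y-1) * (1/((x-1)^(r'+2)*(y-1)^(s'+2))) := by
        field_simp
        ring
      have key : (x*y-1) * (S1x x y (r'+2) (s'+2) + S1x y x (s'+2) (r'+2) - T3x x y (r'+2) (s'+2))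
          = (x*y-1) * (1/((x-1)^(r'+2)*(y-1)^(s'+2))) := by
        linear_combination E1 + E2 - E3 + y * I1 + x * I2 - I3 + alg
      exact mul_left_cancel₀ hxy key

lemma sum_Icc_one (m : ℕ) (f : ℕ → ℝ) :
    ∑ j ∈ Finset.Icc 1 m, f j = ∑ i ∈ Finset.range m, f (i+1) := by
  induction m with
  | zero => simp
  | succ n ih => rw [Finset.sum_Icc_succ_top (by omega), ih, Finset.sum_range_succ]

theorem stmt1 (q : ℝ) (hq : 1 < q) (r s u v : ℕ)
    (hr : 0 < r) (hs : 0 < s) (hu : 0 < u) (hv : 0 < v) :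
    1 / (qa q u ^ r * qa q v ^ s) =
      (∑ a ∈ Finset.range r, ∑ b ∈ Finset.range (r - a),
        ((a + s - 1).choose a * (s - 1).choose b : ℝ) * (1 - q) ^ b *
          q ^ ((s - 1 - b) * u + a * v) /
            (qa q u ^ (r - a - b) * qa q (u + v) ^ (s + a)))
      + (∑ a ∈ Finset.range s, ∑ b ∈ Finset.range (s - a),
        ((a + r - 1).choose a * (r - 1).choose b : ℝ) * (1 - q) ^ b *
          q ^ (a * u + (r - 1 - b) * v) /
            (qa q v ^ (s - a - b) * qa q (u + v) ^ (r + a)))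
      - (∑ j ∈ Finset.Icc 1 (min r s),
        ((r + s - j - 1).choose (r - j) * (s - 1).choose (s - j) : ℝ) * (1 - q) ^ j *
          q ^ ((s - j) * u + (r - j) * v) / qa q (u + v) ^ (r + s - j)) := by
  have hq1 : q - 1 ≠ 0 := sub_ne_zero.mpr (ne_of_gt hq)
  have hx1 : (1:ℝ) < q^u := one_lt_pow₀ hq (by omega)
  have hy1 : (1:ℝ) < q^v := one_lt_pow₀ hq (by omega)
  have hxy1 : (1:ℝ) < q^u * q^v := by rw [← pow_add]; exact one_lt_pow₀ hq (by omega)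
  have hx : q^u - 1 ≠ 0 := sub_ne_zero.mpr (ne_of_gt hx1)
  have hy : q^v - 1 ≠ 0 := sub_ne_zero.mpr (ne_of_gt hy1)
  have hxy : q^u * q^v - 1 ≠ 0 := sub_ne_zero.mpr (ne_of_gt hxy1)
  have hqu : qa q u = (q^u - 1)/(q-1) := rfl
  have hqv : qa q v = (q^v - 1)/(q-1) := rfl
  have hquv : qa q (u+v) = (q^u * q^v - 1)/(q-1) := by rw [qa, pow_add]
  have hmain := main_xy (q^u) (q^v) hx hy hxy (r+s) r s rfl hr hs
  have hsign : ∀ b : ℕ, (1-q)^b = (-1)^b * (q-1)^b := by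
    intro b
    rw [show (1-q) = -(q-1) by ring, neg_pow]
  -- LHS conversion
  have hL : 1 / (qa q u ^ r * qa q v ^ s)
      = (q-1)^(r+s) * (1/((q^u-1)^r * (q^v-1)^s)) := by
    rw [hqu, hqv, div_pow, div_pow, pow_add]
    have p1 : (q^u-1)^r ≠ 0 := pow_ne_zero _ hx
    have p2 : (q^v-1)^s ≠ 0 := pow_ne_zero _ hy
    have p3 : (q-1)^r ≠ 0 := pow_ne_zero _ hq1
    have p4 : (q-1)^s ≠ 0 := pow_ne_zero _ hq1
    field_simp
  -- S1 conversion
  have h1 : (∑ a ∈ Finset.range r, ∑ b ∈ Finset.range (r - a),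
        ((a + s - 1).choose a * (s - 1).choose b : ℝ) * (1 - q) ^ b *
          q ^ ((s - 1 - b) * u + a * v) /
            (qa q u ^ (r - a - b) * qa q (u + v) ^ (s + a)))
      = (q-1)^(r+s) * S1x (q^u) (q^v) r s := by
    rw [S1x, mul_sum]
    refine sum_congr rfl fun a ha => ?_
    rw [mul_sum]
    refine sum_congr rfl fun b hb => ?_
    have ha' : a < r := mem_range.mp ha
    have hb' : b < r - a := mem_range.mp hb
    rw [hqu, hquv, div_pow, div_pow, pow_add, pow_mul, pow_mul, hsign b]
    rw [div_mul_div_comm, div_div_eq_mul_div, ← mul_div_assoc]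
    congr 1
    have hpow : (q-1)^b * ((q-1)^(r-a-b) * (q-1)^(s+a)) = (q-1)^(r+s) := by
      rw [← pow_add, ← pow_add, show b + (r-a-b+(s+a)) = r+s by omega]
    linear_combination (((a + s - 1).choose a * (s - 1).choose b : ℝ) *
      (q^u)^(s-1-b) * (q^v)^a * (-1)^b) * hpow
  -- S2 conversion
  have h2 : (∑ a ∈ Finset.range s, ∑ b ∈ Finset.range (s - a),
        ((a + r - 1).choose a * (r - 1).choose b : ℝ) * (1 - q) ^ b *
          q ^ (a * u + (r - 1 - b) * v) /
            (qa q v ^ (s - a - b) * qa q (u + v) ^ (r + a)))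
      = (q-1)^(r+s) * S1x (q^v) (q^u) s r := by
    rw [S1x, mul_sum]
    refine sum_congr rfl fun a ha => ?_
    rw [mul_sum]
    refine sum_congr rfl fun b hb => ?_
    have ha' : a < s := mem_range.mp ha
    have hb' : b < s - a := mem_range.mp hb
    have hquv' : qa q (u+v) = (q^v * q^u - 1)/(q-1) := by rw [hquv, mul_comm]
    rw [hqv, hquv', div_pow, div_pow, pow_add, pow_mul, pow_mul, hsign b]
    rw [div_mul_div_comm, div_div_eq_mul_div, ← mul_div_assoc]
    congr 1
    have hpow : (q-1)^b * ((q-1)^(s-a-b) * (q-1)^(r+a)) = (q-1)^(r+s) := by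
      rw [← pow_add, ← pow_add, show b + (s-a-b+(r+a)) = r+s by omega]
    linear_combination (((a + r - 1).choose a * (r - 1).choose b : ℝ) *
      (q^v)^(r-1-b) * (q^u)^a * (-1)^b) * hpow
  -- S3 conversion
  have h3 : (∑ j ∈ Finset.Icc 1 (min r s),
        ((r + s - j - 1).choose (r - j) * (s - 1).choose (s - j) : ℝ) * (1 - q) ^ j *
          q ^ ((s - j) * u + (r - j) * v) / qa q (u + v) ^ (r + s - j))
      = (q-1)^(r+s) * T3x (q^u) (q^v) r s := by
    rw [sum_Icc_one, T3x, mul_sum]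
    refine sum_congr rfl fun i hi => ?_
    have hi' : i < min r s := mem_range.mp hi
    rw [show r+s-(i+1)-1 = r+s-i-2 by omega, show r-(i+1) = r-i-1 by omega,
        show s-(i+1) = s-i-1 by omega, show r+s-(i+1) = r+s-i-1 by omega,
        hquv, div_pow]
    rw [div_div_eq_mul_div, ← mul_div_assoc]
    congr 1
    have hpow : (q-1)^(i+1) * (q-1)^(r+s-i-1) = (q-1)^(r+s) := by
      rw [← pow_add, show (i+1) + (r+s-i-1) = r+s by omega]
    linear_combination ((((r+s-i-2).choose (r-i-1) * (s-1).choose (s-i-1) : ℝ)) *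
        q ^ ((s-i-1) * u + (r-i-1) * v) * (q-1)^(r+s-i-1)) * (hsign (i+1))
      + ((((r+s-i-2).choose (r-i-1) * (s-1).choose (s-i-1) : ℝ)) * (-1)^(i+1) *
        q ^ ((s-i-1) * u + (r-i-1) * v)) * hpow
  rw [hL, h1, h2, h3]
  linear_combination (-(q-1)^(r+s)) * hmain
end

section
/- If r and s are integers with r ≥ 2 and s ≥ 2, then ζ(r)·ζ(s) = Σ_{a=0}^{r-1} C(a+s-1, s-1) ζ(s+a, r-a) + Σ_{a=0}^{s-1} C(a+r-1, r-1) ζ(r+a, s-a), where ζ(p,q) := Σ_{m>n≥1} m^{-p} n^{-q} and ζ is the Riemann zeta function. -/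
/-- `zeta k = Σ_{n≥1} n^{-k}`. -/
noncomputable def zeta (k : ℕ) : ℝ := ∑' n : ℕ, 1 / ((n : ℝ) + 1) ^ k

/-- `zeta2 p q = Σ_{m>n≥1} m^{-p} n^{-q}`. -/
noncomputable def zeta2 (p q : ℕ) : ℝ :=
  ∑' (i : ℕ) (j : ℕ), 1 / (((i : ℝ) + (j : ℝ) + 2) ^ p * ((j : ℝ) + 1) ^ q)

open Finset

noncomputable def S (r s : ℕ) (x y : ℝ) : ℝ :=
  ∑ a ∈ Finset.range r, ((s - 1 + a).choose a : ℝ) / (x ^ (r - a) * (x + y) ^ (s + a))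

lemma S_one_left (r : ℕ) (x y : ℝ) : S 1 r x y = 1 / (x * (x + y) ^ r) := by
  simp [S]

lemma aux_div (c X P : ℝ) (hP : P ≠ 0) (k : ℕ) : c / (X * P ^ (k + 1)) * P = c / (X * P ^ k) := by
  rcases eq_or_ne X 0 with rfl | hX
  · simp
  · field_simp
    ring

lemma Srec1 (r : ℕ) (x y : ℝ) (hxy : x + y ≠ 0) :
    S (r + 1) 1 x y * (x + y) = S r 1 x y + 1 / x ^ (r + 1) := by
  unfold S
  rw [Finset.sum_mul, Finset.sum_range_succ']
  simp only [Nat.sub_self, Nat.zero_add, Nat.choose_self, Nat.cast_one, Nat.sub_zero]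
  congr 1
  · refine Finset.sum_congr rfl fun a ha => ?_
    rw [show r + 1 - (a + 1) = r - a by omega, show 1 + (a + 1) = (1 + a) + 1 by omega,
      aux_div _ _ _ hxy]
  · rw [show (1:ℕ) + 0 = 0 + 1 from rfl, aux_div _ _ _ hxy, pow_zero, mul_one]

lemma Srec (r s : ℕ) (x y : ℝ) (hxy : x + y ≠ 0) :
    S (r + 1) (s + 1 + 1) x y * (x + y) = S r (s + 1 + 1) x y + S (r + 1) (s + 1) x y := by
  unfold S
  rw [Finset.sum_mul, Finset.sum_range_succ', Finset.sum_range_succ' (n := r)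
    (f := fun a => ((s + 1 - 1 + a).choose a : ℝ) / (x ^ (r + 1 - a) * (x + y) ^ (s + 1 + a)))]
  simp only [Nat.add_sub_cancel, Nat.zero_add, Nat.choose_zero_right, Nat.cast_one, Nat.sub_zero]
  rw [← add_assoc, add_right_comm]
  congr 1
  · rw [← Finset.sum_add_distrib]
    refine Finset.sum_congr rfl fun a ha => ?_
    rw [show r + 1 - (a + 1) = r - a by omega,
      show s + 1 + 1 + (a + 1) = (s + 1 + 1 + a) + 1 by omega, aux_div _ _ _ hxy,
      show s + 1 + (a + 1) = s + 1 + 1 + a by omega]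
    have hP : ((s + 1 + 1 + a).choose (a + 1) : ℝ)
        = ((s + 1 + a).choose a : ℝ) + ((s + (a + 1)).choose (a + 1) : ℝ) := by
      norm_cast
      rw [show s + 1 + 1 + a = (s + 1 + a) + 1 by omega, show s + (a + 1) = s + 1 + a by omega]
      exact Nat.choose_succ_succ (s + 1 + a) a
    rw [hP, add_div]
  · rw [show s + 1 + 1 + 0 = (s + 1 + 0) + 1 by omega, aux_div _ _ _ hxy]

lemma Srec' (r s : ℕ) (hs : 1 ≤ s) (x y : ℝ) (hxy : x + y ≠ 0) :
    S (r + 1) (s + 1) x y * (x + y) = S r (s + 1) x y + S (r + 1) s x y := by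
  obtain ⟨t, rfl⟩ : ∃ t, s = t + 1 := ⟨s - 1, by omega⟩
  exact Srec r t x y hxy

lemma pf_one (r : ℕ) (hr : 1 ≤ r) (x y : ℝ) (hx : 0 < x) (hy : 0 < y) :
    1 / (x ^ r * y ^ 1) = S r 1 x y + S 1 r y x := by
  induction r, hr using Nat.le_induction with
  | base =>
    rw [S_one_left, S_one_left]
    have hx' := hx.ne'
    have hy' := hy.ne'
    have hxy : x + y ≠ 0 := by positivity
    field_simp
    ring
  | succ r hr ih =>
    have hx' := hx.ne'
    have hy' := hy.ne'
    have hxy : x + y ≠ 0 := by positivity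
    have hyx : y + x ≠ 0 := by positivity
    rw [S_one_left] at ih ⊢
    apply mul_right_cancel₀ hxy
    rw [add_mul, Srec1 r x y hxy]
    have e5 : (1:ℝ) / (y * (y + x) ^ (r + 1)) * (x + y) = 1 / (y * (y + x) ^ r) := by
      rw [add_comm x y]; exact aux_div 1 y (y + x) hyx r
    rw [e5, add_right_comm, ← ih]
    field_simp
    ring

lemma pf (s : ℕ) (hs : 1 ≤ s) : ∀ r, 1 ≤ r → ∀ x y : ℝ, 0 < x → 0 < y →
    1 / (x ^ r * y ^ s) = S r s x y + S s r y x := by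
  induction s, hs using Nat.le_induction with
  | base => exact fun r hr x y hx hy => pf_one r hr x y hx hy
  | succ s hs ih =>
    intro r hr
    induction r, hr using Nat.le_induction with
    | base =>
      intro x y hx hy
      have h := pf_one (s + 1) (by omega) y x hy hx
      rw [show x ^ 1 * y ^ (s + 1) = y ^ (s + 1) * x ^ 1 by ring, h, add_comm]
    | succ r hr ihr =>
      intro x y hx hy
      have hx' := hx.ne'
      have hy' := hy.ne'
      have hxy : x + y ≠ 0 := by positivity
      have h1 := Srec' r s hs x y hxy
      have h2 : S (s + 1) (r + 1) y x * (x + y) = S s (r + 1) y x + S (s + 1) r y x := by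
        rw [add_comm x y]; exact Srec' s r hr y x (by positivity)
      have e1 := ihr x y hx hy
      have e2 := ih (r + 1) (by omega) x y hx hy
      apply mul_right_cancel₀ hxy
      rw [add_mul, h1, h2, show S r (s + 1) x y + S (r + 1) s x y + (S s (r + 1) y x + S (s + 1) r y x)
          = (S r (s + 1) x y + S (s + 1) r y x) + (S (r + 1) s x y + S s (r + 1) y x) by ring,
        ← e1, ← e2]
      field_simp
      ring

noncomputable def G (p q : ℕ) (z : ℕ × ℕ) : ℝ :=
  1 / (((z.1 : ℝ) + (z.2 : ℝ) + 2) ^ p * ((z.2 : ℝ) + 1) ^ q)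

lemma summable_shift (k : ℕ) (hk : 2 ≤ k) :
    Summable (fun n : ℕ => 1 / ((n : ℝ) + 1) ^ k) := by
  have h : Summable (fun n : ℕ => 1 / (n : ℝ) ^ k) :=
    Real.summable_one_div_nat_pow.2 (by omega)
  have h2 : Summable (fun n : ℕ => 1 / (((n + 1 : ℕ)) : ℝ) ^ k) :=
    (summable_nat_add_iff (f := fun n : ℕ => 1 / (n : ℝ) ^ k) 1).2 h
  refine h2.congr fun n => ?_
  push_cast
  ring

lemma G_summable (p q : ℕ) (hp : 2 ≤ p) (hq : 1 ≤ q) (hpq : 4 ≤ p + q) :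
    Summable (G p q) := by
  have h2 := summable_shift 2 le_rfl
  have a1 : (0:ℕ → ℝ) ≤ fun n : ℕ => 1 / ((n : ℝ) + 1) ^ 2 := fun n => by positivity
  have hmaj : Summable (fun z : ℕ × ℕ => (1 / ((z.1 : ℝ) + 1) ^ 2) * (1 / ((z.2 : ℝ) + 1) ^ 2)) :=
    Summable.mul_of_nonneg (f := fun n : ℕ => 1 / ((n : ℝ) + 1) ^ 2)
      (g := fun n : ℕ => 1 / ((n : ℝ) + 1) ^ 2) h2 h2 a1 a1
  refine Summable.of_nonneg_of_le (fun z => by unfold G; positivity) (fun z => ?_) hmaj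
  obtain ⟨i, j⟩ := z
  unfold G
  rw [div_mul_div_comm, one_mul]
  set I : ℝ := (i : ℝ) + 1 with hI
  set J : ℝ := (j : ℝ) + 1 with hJ
  have hI1 : (1:ℝ) ≤ I := by simp [hI]
  have hJ1 : (1:ℝ) ≤ J := by simp [hJ]
  have hB : ((i : ℝ) + (j : ℝ) + 2) = I + J := by simp [hI, hJ]; ring
  rw [hB]
  have hIB : I ≤ I + J := by linarith
  have hJB : J ≤ I + J := by linarith
  have hB1 : (1:ℝ) ≤ I + J := by linarith
  have hpos : (0:ℝ) < I ^ 2 * J ^ 2 := by positivity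
  apply one_div_le_one_div_of_le hpos
  rcases Nat.lt_or_ge q 2 with hq2 | hq2
  · -- q = 1, p ≥ 3
    have hq1 : q = 1 := by omega
    subst hq1
    rw [pow_one]
    calc I ^ 2 * J ^ 2 = (I ^ 2 * J) * J := by ring
      _ ≤ ((I + J) ^ 2 * (I + J)) * J := by
          apply mul_le_mul_of_nonneg_right _ (by positivity)
          exact mul_le_mul (pow_le_pow_left₀ (by positivity) hIB 2) hJB (by positivity) (by positivity)
      _ = (I + J) ^ 3 * J := by ring
      _ ≤ (I + J) ^ p * J := by
          apply mul_le_mul_of_nonneg_right _ (by positivity)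
          exact pow_le_pow_right₀ hB1 (by omega)
  · calc I ^ 2 * J ^ 2 ≤ (I + J) ^ p * J ^ q := by
          apply mul_le_mul _ (pow_le_pow_right₀ hJ1 hq2) (by positivity) (by positivity)
          exact le_trans (pow_le_pow_left₀ (by positivity) hIB 2) (pow_le_pow_right₀ hB1 hp)

lemma zeta2_eq (p q : ℕ) (h : Summable (G p q)) : zeta2 p q = ∑' z : ℕ × ℕ, G p q z := by
  rw [zeta2]
  exact (Summable.tsum_prod' h fun b => h.prod_factor b).symm

theorem stmt6 (r s : ℕ) (hr : 2 ≤ r) (hs : 2 ≤ s) :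
    zeta r * zeta s =
      (∑ a ∈ Finset.range r, ((a + s - 1).choose (s - 1) : ℝ) * zeta2 (s + a) (r - a))
      + (∑ a ∈ Finset.range s, ((a + r - 1).choose (r - 1) : ℝ) * zeta2 (r + a) (s - a)) := by
  have hzr := summable_shift r hr
  have hzs := summable_shift s hs
  have hnr : Summable (fun n : ℕ => ‖1 / ((n : ℝ) + 1) ^ r‖) :=
    hzr.congr fun n => (Real.norm_of_nonneg (by positivity)).symm
  have hns : Summable (fun n : ℕ => ‖1 / ((n : ℝ) + 1) ^ s‖) :=
    hzs.congr fun n => (Real.norm_of_nonneg (by positivity)).symm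
  have step1 : zeta r * zeta s
      = ∑' z : ℕ × ℕ, (1 / ((z.1 : ℝ) + 1) ^ r) * (1 / ((z.2 : ℝ) + 1) ^ s) := by
    rw [zeta, zeta]
    exact tsum_mul_tsum_of_summable_norm hnr hns
  have hGsum1 : ∀ a ∈ Finset.range r,
      Summable (fun z : ℕ × ℕ => ((s - 1 + a).choose a : ℝ) * G (s + a) (r - a) (z.2, z.1)) := by
    intro a ha
    rw [Finset.mem_range] at ha
    have h := G_summable (s + a) (r - a) (by omega) (by omega) (by omega)
    exact (((Equiv.prodComm ℕ ℕ).summable_iff).2 h).mul_left _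
  have hGsum2 : ∀ b ∈ Finset.range s,
      Summable (fun z : ℕ × ℕ => ((r - 1 + b).choose b : ℝ) * G (r + b) (s - b) z) := by
    intro b hb
    rw [Finset.mem_range] at hb
    exact (G_summable (r + b) (s - b) (by omega) (by omega) (by omega)).mul_left _
  have hterm : ∀ z : ℕ × ℕ, (1 / ((z.1 : ℝ) + 1) ^ r) * (1 / ((z.2 : ℝ) + 1) ^ s)
      = (∑ a ∈ Finset.range r, ((s - 1 + a).choose a : ℝ) * G (s + a) (r - a) (z.2, z.1))
        + (∑ b ∈ Finset.range s, ((r - 1 + b).choose b : ℝ) * G (r + b) (s - b) z) := by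
    rintro ⟨m, n⟩
    have hx : (0:ℝ) < (m : ℝ) + 1 := by positivity
    have hy : (0:ℝ) < (n : ℝ) + 1 := by positivity
    have h := pf s (by omega) r (by omega) ((m : ℝ) + 1) ((n : ℝ) + 1) hx hy
    rw [div_mul_div_comm, one_mul, h, S, S]
    congr 1
    · refine Finset.sum_congr rfl fun a ha => ?_
      simp only [G, mul_one_div]
      congr 1
      ring
    · refine Finset.sum_congr rfl fun b hb => ?_
      simp only [G, mul_one_div]
      congr 1
      ring
  rw [step1, tsum_congr hterm, Summable.tsum_add (summable_sum hGsum1) (summable_sum hGsum2),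
    Summable.tsum_finsetSum hGsum1, Summable.tsum_finsetSum hGsum2]
  congr 1
  · refine Finset.sum_congr rfl fun a ha => ?_
    rw [Finset.mem_range] at ha
    have he : ∑' z : ℕ × ℕ, G (s + a) (r - a) (z.2, z.1) = ∑' z : ℕ × ℕ, G (s + a) (r - a) z :=
      (Equiv.prodComm ℕ ℕ).tsum_eq (G (s + a) (r - a))
    rw [tsum_mul_left, he, ← zeta2_eq _ _ (G_summable (s + a) (r - a) (by omega) (by omega) (by omega))]
    have hc : (s - 1 + a).choose a = (a + s - 1).choose (s - 1) := by
      have h := Nat.choose_symm (n := s - 1 + a) (k := a) (by omega)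
      rw [show s - 1 + a - a = s - 1 by omega] at h
      rw [show a + s - 1 = s - 1 + a by omega]
      exact h.symm
    rw [hc]
  · refine Finset.sum_congr rfl fun b hb => ?_
    rw [Finset.mem_range] at hb
    rw [tsum_mul_left, ← zeta2_eq _ _ (G_summable (r + b) (s - b) (by omega) (by omega) (by omega))]
    have hc : (r - 1 + b).choose b = (b + r - 1).choose (r - 1) := by
      have h := Nat.choose_symm (n := r - 1 + b) (k := b) (by omega)
      rw [show r - 1 + b - b = r - 1 by omega] at h
      rw [show b + r - 1 = r - 1 + b by omega]
      exact h.symm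
    rw [hc]
end

section
/- For every integer s > 1, Euler's formula ζ(s,1) = (s/2)·ζ(s+1) − (1/2)·Σ_{k=2}^{s-1} ζ(k) ζ(s+1−k) holds, where ζ(s,1) := Σ_{m>n≥1} m^{-s} n^{-1}. -/
open Finset Filter Topology Function

namespace E11

lemma one_le_np1 (n : ℕ) : (1:ℝ) ≤ (n:ℝ) + 1 := by
  have := n.cast_nonneg (α := ℝ); linarith

noncomputable def w (n : ℕ) : ℝ := (((n : ℝ) + 1) ^ ((3:ℝ)/2))⁻¹

lemma w_pos (n : ℕ) : 0 < w n := by unfold w; positivity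

lemma summable_w : Summable w := by
  have h : Summable (fun n : ℕ => 1 / ((n:ℝ) ^ ((3:ℝ)/2))) :=
    Real.summable_one_div_nat_rpow.2 (by norm_num)
  have h2 := (summable_nat_add_iff 1).2 h
  refine h2.congr fun n => ?_
  unfold w
  rw [one_div]
  push_cast
  norm_num

lemma summable_double (F : ℕ × ℕ → ℝ) (h0 : ∀ p, 0 ≤ F p)
    (h : ∀ p : ℕ × ℕ, ((((p.1:ℝ)+1) ^ ((3:ℝ)/2)) * (((p.2:ℝ)+1) ^ ((3:ℝ)/2))) * F p ≤ 1) :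
    Summable F := by
  have hm : Summable (fun p : ℕ × ℕ => w p.1 * w p.2) :=
    summable_w.mul_of_nonneg summable_w (fun n => (w_pos n).le) (fun n => (w_pos n).le)
  refine hm.of_nonneg_of_le h0 fun p => ?_
  have hx : (0:ℝ) < (((p.1:ℝ)+1) ^ ((3:ℝ)/2)) * (((p.2:ℝ)+1) ^ ((3:ℝ)/2)) := by positivity
  have h1 : F p * ((((p.1:ℝ)+1) ^ ((3:ℝ)/2)) * (((p.2:ℝ)+1) ^ ((3:ℝ)/2))) ≤ 1 := by
    rw [mul_comm]; exact h p
  have h2 := (le_div_iff₀ hx).2 h1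
  calc F p ≤ 1 / ((((p.1:ℝ)+1) ^ ((3:ℝ)/2)) * (((p.2:ℝ)+1) ^ ((3:ℝ)/2))) := h2
    _ = w p.1 * w p.2 := by unfold w; rw [one_div, mul_inv]

lemma key_bound {a b c : ℝ} (ha : 1 ≤ a) (hb : 1 ≤ b) (h1 : a ≤ c) (h2 : b ≤ c) :
    a ^ ((3:ℝ)/2) * b ^ ((3:ℝ)/2) ≤ c ^ 2 * b := by
  have ha0 : (0:ℝ) ≤ a := by linarith
  have hb0 : (0:ℝ) ≤ b := by linarith
  have hc0 : (0:ℝ) ≤ c := by linarith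
  have e1 : b ^ ((3:ℝ)/2) = b ^ ((1:ℝ)/2) * b := by
    rw [show (3:ℝ)/2 = 1/2 + 1 by norm_num, Real.rpow_add (by linarith : (0:ℝ) < b),
      Real.rpow_one]
  have e2 : a ^ ((3:ℝ)/2) ≤ c ^ ((3:ℝ)/2) := Real.rpow_le_rpow ha0 h1 (by norm_num)
  have e3 : c ^ ((3:ℝ)/2) * c ^ ((1:ℝ)/2) = c ^ 2 := by
    rw [← Real.rpow_add' hc0 (by norm_num)]
    rw [show ((3:ℝ)/2 + 1/2) = ((2:ℕ):ℝ) by norm_num, Real.rpow_natCast]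
  have e4 : b ^ ((1:ℝ)/2) ≤ c ^ ((1:ℝ)/2) := Real.rpow_le_rpow hb0 h2 (by norm_num)
  calc a ^ ((3:ℝ)/2) * b ^ ((3:ℝ)/2) = (a ^ ((3:ℝ)/2) * b ^ ((1:ℝ)/2)) * b := by rw [e1]; ring
    _ ≤ (c ^ ((3:ℝ)/2) * c ^ ((1:ℝ)/2)) * b := by
        have h5 : a ^ ((3:ℝ)/2) * b ^ ((1:ℝ)/2) ≤ c ^ ((3:ℝ)/2) * c ^ ((1:ℝ)/2) :=
          mul_le_mul e2 e4 (Real.rpow_nonneg hb0 _) (Real.rpow_nonneg hc0 _)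
        exact mul_le_mul_of_nonneg_right h5 hb0
    _ = c ^ 2 * b := by rw [e3]

lemma key_bound2 {a b : ℝ} (ha : 1 ≤ a) (hb : 1 ≤ b) :
    a ^ ((3:ℝ)/2) * b ^ ((3:ℝ)/2) ≤ a * b * (a + b) := by
  have ha0 : (0:ℝ) ≤ a := by linarith
  have hb0 : (0:ℝ) ≤ b := by linarith
  have e1 : a ^ ((3:ℝ)/2) = a ^ ((1:ℝ)/2) * a := by
    rw [show (3:ℝ)/2 = 1/2 + 1 by norm_num, Real.rpow_add (by linarith : (0:ℝ) < a),
      Real.rpow_one]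
  have e1b : b ^ ((3:ℝ)/2) = b ^ ((1:ℝ)/2) * b := by
    rw [show (3:ℝ)/2 = 1/2 + 1 by norm_num, Real.rpow_add (by linarith : (0:ℝ) < b),
      Real.rpow_one]
  have e2 : a ^ ((1:ℝ)/2) * b ^ ((1:ℝ)/2) ≤ a + b := by
    rw [← Real.mul_rpow ha0 hb0]
    have h3 : a * b ≤ (a+b)^2 := by nlinarith
    calc (a*b) ^ ((1:ℝ)/2) ≤ ((a+b)^2) ^ ((1:ℝ)/2) :=
          Real.rpow_le_rpow (by positivity) h3 (by norm_num)
      _ = a + b := by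
          rw [← Real.rpow_natCast (a+b) 2, ← Real.rpow_mul (by linarith)]
          norm_num
  calc a ^ ((3:ℝ)/2) * b ^ ((3:ℝ)/2) = (a ^ ((1:ℝ)/2) * b ^ ((1:ℝ)/2)) * (a * b) := by
        rw [e1, e1b]; ring
    _ ≤ (a + b) * (a * b) := mul_le_mul_of_nonneg_right e2 (by positivity)
    _ = a * b * (a + b) := by ring


noncomputable def u (a b : ℕ) (q : ℕ × ℕ) : ℝ :=
  1 / (((q.1:ℝ) + (q.2:ℝ) + 2) ^ a * ((q.2:ℝ) + 1) ^ b)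

noncomputable def G (s : ℕ) (p : ℕ × ℕ) : ℝ :=
  if p.2 < p.1 then 1 / (((p.1:ℝ) + 1) ^ s * ((p.2:ℝ) + 1)) else 0

noncomputable def p1 (s : ℕ) (q : ℕ × ℕ) : ℝ :=
  1 / (((q.1:ℝ) + 1) * (((q.1:ℝ) + (q.2:ℝ) + 2)) * ((q.2:ℝ) + 1) ^ (s - 1))

noncomputable def p2 (s : ℕ) (q : ℕ × ℕ) : ℝ :=
  1 / (((q.1:ℝ) + 1) * ((q.2:ℝ) + 1) * (((q.1:ℝ) + (q.2:ℝ) + 2)) ^ (s - 1))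

lemma summable_zpow {k : ℕ} (hk : 2 ≤ k) : Summable (fun n : ℕ => 1 / ((n:ℝ) + 1) ^ k) := by
  have h : Summable (fun n : ℕ => 1 / ((n:ℝ) ^ k)) :=
    Real.summable_one_div_nat_pow.2 (by omega)
  have h2 := (summable_nat_add_iff 1).2 h
  refine h2.congr fun n => ?_
  push_cast
  norm_num

lemma summable_u {a b : ℕ} (ha : 2 ≤ a) (hb : 1 ≤ b) : Summable (u a b) := by
  refine summable_double _ (fun p => by unfold u; positivity) fun p => ?_
  unfold u
  have h1 : (1:ℝ) ≤ (p.1:ℝ) + 1 := one_le_np1 _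
  have h2 : (1:ℝ) ≤ (p.2:ℝ) + 1 := one_le_np1 _
  have hm1 : (1:ℝ) ≤ (p.1:ℝ) + (p.2:ℝ) + 2 := by linarith
  have hD : (0:ℝ) < ((p.1:ℝ) + (p.2:ℝ) + 2) ^ a * ((p.2:ℝ) + 1) ^ b := by positivity
  rw [mul_one_div, div_le_one hD]
  calc ((p.1:ℝ)+1) ^ ((3:ℝ)/2) * ((p.2:ℝ)+1) ^ ((3:ℝ)/2)
      ≤ ((p.1:ℝ) + (p.2:ℝ) + 2) ^ 2 * ((p.2:ℝ) + 1) :=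
        key_bound h1 h2 (by linarith) (by linarith)
    _ ≤ ((p.1:ℝ) + (p.2:ℝ) + 2) ^ a * ((p.2:ℝ) + 1) ^ b := by
        have e1 : ((p.1:ℝ) + (p.2:ℝ) + 2) ^ 2 ≤ ((p.1:ℝ) + (p.2:ℝ) + 2) ^ a :=
          pow_le_pow_right₀ hm1 ha
        have e2 : ((p.2:ℝ) + 1) ≤ ((p.2:ℝ) + 1) ^ b := by
          calc ((p.2:ℝ) + 1) = ((p.2:ℝ) + 1) ^ 1 := (pow_one _).symm
            _ ≤ ((p.2:ℝ) + 1) ^ b := pow_le_pow_right₀ h2 hb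
        exact mul_le_mul e1 e2 (by linarith) (by positivity)

lemma summable_G {s : ℕ} (hs : 2 ≤ s) : Summable (G s) := by
  refine summable_double _ (fun p => ?_) fun p => ?_
  · unfold G; split
    · positivity
    · exact le_rfl
  · unfold G
    have h1 : (1:ℝ) ≤ (p.1:ℝ) + 1 := one_le_np1 _
    have h2 : (1:ℝ) ≤ (p.2:ℝ) + 1 := one_le_np1 _
    split
    · rename_i hlt
      have hc : ((p.2:ℝ) + 1) ≤ (p.1:ℝ) + 1 := by
        have : (p.2:ℝ) ≤ (p.1:ℝ) := by exact_mod_cast hlt.le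
        linarith
      have hD : (0:ℝ) < ((p.1:ℝ) + 1) ^ s * ((p.2:ℝ) + 1) := by positivity
      rw [mul_one_div, div_le_one hD]
      calc ((p.1:ℝ)+1) ^ ((3:ℝ)/2) * ((p.2:ℝ)+1) ^ ((3:ℝ)/2)
          ≤ ((p.1:ℝ) + 1) ^ 2 * ((p.2:ℝ) + 1) := key_bound h1 h2 le_rfl hc
        _ ≤ ((p.1:ℝ) + 1) ^ s * ((p.2:ℝ) + 1) := by
            have := pow_le_pow_right₀ h1 hs
            exact mul_le_mul_of_nonneg_right this (by linarith)
    · rw [mul_zero]; norm_num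

lemma summable_p1 {s : ℕ} (hs : 2 ≤ s) : Summable (p1 s) := by
  refine summable_double _ (fun p => by unfold p1; positivity) fun p => ?_
  unfold p1
  have h1 : (1:ℝ) ≤ (p.1:ℝ) + 1 := one_le_np1 _
  have h2 : (1:ℝ) ≤ (p.2:ℝ) + 1 := one_le_np1 _
  have hD : (0:ℝ) < ((p.1:ℝ)+1) * (((p.1:ℝ) + (p.2:ℝ) + 2)) * ((p.2:ℝ) + 1) ^ (s-1) := by
    positivity
  rw [mul_one_div, div_le_one hD]
  calc ((p.1:ℝ)+1) ^ ((3:ℝ)/2) * ((p.2:ℝ)+1) ^ ((3:ℝ)/2)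
      ≤ ((p.1:ℝ)+1) * ((p.2:ℝ)+1) * (((p.1:ℝ)+1) + ((p.2:ℝ)+1)) := key_bound2 h1 h2
    _ ≤ ((p.1:ℝ)+1) * (((p.1:ℝ) + (p.2:ℝ) + 2)) * ((p.2:ℝ) + 1) ^ (s-1) := by
        have e2 : ((p.2:ℝ) + 1) ≤ ((p.2:ℝ) + 1) ^ (s-1) := by
          calc ((p.2:ℝ) + 1) = ((p.2:ℝ) + 1) ^ 1 := (pow_one _).symm
            _ ≤ ((p.2:ℝ) + 1) ^ (s-1) := pow_le_pow_right₀ h2 (by omega)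
        nlinarith [mul_le_mul_of_nonneg_left e2
          (by positivity : (0:ℝ) ≤ ((p.1:ℝ)+1) * ((p.1:ℝ) + (p.2:ℝ) + 2))]
    
lemma summable_p2 {s : ℕ} (hs : 2 ≤ s) : Summable (p2 s) := by
  refine summable_double _ (fun p => by unfold p2; positivity) fun p => ?_
  unfold p2
  have h1 : (1:ℝ) ≤ (p.1:ℝ) + 1 := one_le_np1 _
  have h2 : (1:ℝ) ≤ (p.2:ℝ) + 1 := one_le_np1 _
  have hD : (0:ℝ) < ((p.1:ℝ)+1) * ((p.2:ℝ) + 1) * (((p.1:ℝ) + (p.2:ℝ) + 2)) ^ (s-1) := by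
    positivity
  rw [mul_one_div, div_le_one hD]
  calc ((p.1:ℝ)+1) ^ ((3:ℝ)/2) * ((p.2:ℝ)+1) ^ ((3:ℝ)/2)
      ≤ ((p.1:ℝ)+1) * ((p.2:ℝ)+1) * (((p.1:ℝ)+1) + ((p.2:ℝ)+1)) := key_bound2 h1 h2
    _ ≤ ((p.1:ℝ)+1) * ((p.2:ℝ) + 1) * (((p.1:ℝ) + (p.2:ℝ) + 2)) ^ (s-1) := by
        have e2 : ((p.1:ℝ) + (p.2:ℝ) + 2) ≤ ((p.1:ℝ) + (p.2:ℝ) + 2) ^ (s-1) := by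
          calc ((p.1:ℝ) + (p.2:ℝ) + 2) = ((p.1:ℝ) + (p.2:ℝ) + 2) ^ 1 := (pow_one _).symm
            _ ≤ ((p.1:ℝ) + (p.2:ℝ) + 2) ^ (s-1) := pow_le_pow_right₀ (by linarith) (by omega)
        nlinarith [mul_le_mul_of_nonneg_left e2
          (by positivity : (0:ℝ) ≤ ((p.1:ℝ)+1) * ((p.2:ℝ)+1))]


lemma summable_tele (c : ℕ) :
    Summable (fun d : ℕ => 1/((d:ℝ)+(c:ℝ)+1) - 1/((d:ℝ)+(c:ℝ)+2)) := by
  have hsq : Summable (fun d : ℕ => 1 / ((d:ℝ)+1) ^ 2) := summable_zpow le_rfl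
  refine hsq.of_nonneg_of_le (fun d => ?_) (fun d => ?_)
  · have h1 : (0:ℝ) < (d:ℝ)+(c:ℝ)+1 := by positivity
    rw [sub_nonneg]
    apply one_div_le_one_div_of_le h1
    linarith
  · have hc : (0:ℝ) ≤ (c:ℝ) := c.cast_nonneg
    have h1 : (0:ℝ) < (d:ℝ)+(c:ℝ)+1 := by positivity
    have h2 : (0:ℝ) < (d:ℝ)+(c:ℝ)+2 := by positivity
    have e : 1/((d:ℝ)+(c:ℝ)+1) - 1/((d:ℝ)+(c:ℝ)+2)
        = 1/(((d:ℝ)+(c:ℝ)+1)*((d:ℝ)+(c:ℝ)+2)) := by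
      field_simp
      ring
    rw [e]
    apply one_div_le_one_div_of_le (by positivity)
    nlinarith [d.cast_nonneg (α := ℝ)]

lemma tele (c : ℕ) :
    HasSum (fun d : ℕ => 1/((d:ℝ)+(c:ℝ)+1) - 1/((d:ℝ)+(c:ℝ)+2)) (1/((c:ℝ)+1)) := by
  have hs := summable_tele c
  have hnorm : Summable (fun d : ℕ => ‖1/((d:ℝ)+(c:ℝ)+1) - 1/((d:ℝ)+(c:ℝ)+2)‖) := by
    simpa only [Real.norm_eq_abs] using (summable_abs_iff.2 hs)
  rw [hasSum_iff_tendsto_nat_of_summable_norm hnorm]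
  have hps : ∀ D : ℕ, ∑ d ∈ range D, (1/((d:ℝ)+(c:ℝ)+1) - 1/((d:ℝ)+(c:ℝ)+2))
      = 1/((c:ℝ)+1) - 1/((D:ℝ)+(c:ℝ)+1) := by
    intro D
    have h := Finset.sum_range_sub' (f := fun d : ℕ => 1/((d:ℝ)+(c:ℝ)+1)) D
    calc ∑ d ∈ range D, (1/((d:ℝ)+(c:ℝ)+1) - 1/((d:ℝ)+(c:ℝ)+2))
        = ∑ d ∈ range D, (1/((d:ℝ)+(c:ℝ)+1) - 1/(((d+1:ℕ):ℝ)+(c:ℝ)+1)) := by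
          refine Finset.sum_congr rfl fun i _ => ?_
          push_cast
          ring_nf
      _ = 1/(((0:ℕ):ℝ)+(c:ℝ)+1) - 1/((D:ℝ)+(c:ℝ)+1) := h
      _ = 1/((c:ℝ)+1) - 1/((D:ℝ)+(c:ℝ)+1) := by norm_num
  have hT : Tendsto (fun D : ℕ => ((D:ℝ)+(c:ℝ)+1)⁻¹) atTop (𝓝 0) := by
    apply Tendsto.inv_tendsto_atTop
    apply tendsto_atTop_add_const_right
    apply tendsto_atTop_add_const_right
    exact tendsto_natCast_atTop_atTop
  have := tendsto_const_nhds (x := 1/((c:ℝ)+1)) (f := atTop (α := ℕ)) |>.sub hT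
  simp only [one_div] at hps this ⊢
  simp only [hps, sub_zero] at this ⊢
  exact this

lemma tele2 (n : ℕ) :
    ∑' d : ℕ, (1/((d:ℝ)+1) - 1/((n:ℝ)+(d:ℝ)+2))
      = ∑ t ∈ range (n+1), 1/((t:ℝ)+1) := by
  have hpt : ∀ d : ℕ, 1/((d:ℝ)+1) - 1/((n:ℝ)+(d:ℝ)+2)
      = ∑ t ∈ range (n+1), (1/((d:ℝ)+(t:ℝ)+1) - 1/((d:ℝ)+(t:ℝ)+2)) := by
    intro d
    have h := Finset.sum_range_sub' (f := fun t : ℕ => 1/((d:ℝ)+(t:ℝ)+1)) (n+1)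
    calc 1/((d:ℝ)+1) - 1/((n:ℝ)+(d:ℝ)+2)
        = 1/((d:ℝ)+((0:ℕ):ℝ)+1) - 1/((d:ℝ)+(((n+1:ℕ)):ℝ)+1) := by push_cast; ring_nf
      _ = ∑ t ∈ range (n+1), (1/((d:ℝ)+(t:ℝ)+1) - 1/((d:ℝ)+((t+1:ℕ):ℝ)+1)) := h.symm
      _ = ∑ t ∈ range (n+1), (1/((d:ℝ)+(t:ℝ)+1) - 1/((d:ℝ)+(t:ℝ)+2)) := by
          refine Finset.sum_congr rfl fun t _ => ?_
          push_cast
          ring_nf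
  rw [tsum_congr hpt, Summable.tsum_finsetSum (fun t _ => summable_tele t)]
  exact Finset.sum_congr rfl fun t _ => (tele t).tsum_eq

lemma keyPF {n e : ℝ} (hn : 1 ≤ n) (he : 0 < e) (s : ℕ) (hs : 2 ≤ s) :
    ∑ k ∈ Icc 2 (s-1), 1/((n+e)^k * n^(s+1-k))
      = 1/(e*(n+e)*n^(s-1)) - 1/(e*n*(n+e)^(s-1)) := by
  obtain ⟨t, rfl⟩ : ∃ t, s = t + 2 := ⟨s - 2, by omega⟩
  have hn0 : (0:ℝ) < n := by linarith
  have hm0 : (0:ℝ) < n + e := by linarith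
  have hx1 : n / (n+e) ≠ 1 :=
    ne_of_lt ((div_lt_one hm0).2 (by linarith))
  have hre : ∑ k ∈ Icc 2 (t+2-1), 1/((n+e)^k * n^(t+2+1-k))
      = ∑ j ∈ range t, (1/((n+e)^2 * n^(t+1))) * (n/(n+e))^j := by
    rw [show t+2-1 = t+1 from rfl, ← Finset.Ico_add_one_right_eq_Icc, Finset.sum_Ico_eq_sum_range]
    rw [show t+1+1-2 = t from by omega]
    refine Finset.sum_congr rfl fun j hj => ?_
    have hj' : j < t := mem_range.mp hj
    rw [show t+2+1-(2+j) = t+1-j from by omega]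
    have hnn : n^(t+1-j) * n^j = n^(t+1) := by
      rw [← pow_add]
      congr 1
      omega
    rw [div_pow, ← hnn]
    field_simp
    ring
  rw [show t+2-1 = t+1 from rfl] at hre ⊢
  rw [hre, ← Finset.mul_sum, geom_sum_eq hx1]
  have hne : n ≠ n + e := by intro h; linarith
  have h1 : n/(n+e) - 1 ≠ 0 := sub_ne_zero.2 hx1
  rw [div_pow]
  field_simp
  ring

lemma inj1 : Injective (fun q : ℕ × ℕ => ((q.1 + q.2 + 1, q.2) : ℕ × ℕ)) := by
  intro a b h
  simp only [Prod.mk.injEq] at h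
  exact Prod.ext (by omega) h.2

lemma mem_range1 {p : ℕ × ℕ} (h : p.2 < p.1) :
    p ∈ Set.range (fun q : ℕ × ℕ => ((q.1 + q.2 + 1, q.2) : ℕ × ℕ)) := by
  refine ⟨(p.1 - p.2 - 1, p.2), Prod.ext ?_ rfl⟩
  show p.1 - p.2 - 1 + p.2 + 1 = p.1
  omega

lemma u_nonneg (a b : ℕ) (q : ℕ × ℕ) : 0 ≤ u a b q := by unfold u; positivity

noncomputable def Ff (k l : ℕ) (p : ℕ × ℕ) : ℝ := (1/((p.1:ℝ)+1)^k) * (1/((p.2:ℝ)+1)^l)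

lemma summable_Ff {k l : ℕ} (hk : 2 ≤ k) (hl : 2 ≤ l) : Summable (Ff k l) := by
  unfold Ff
  exact (summable_zpow hk).mul_of_nonneg (summable_zpow hl)
    (fun n => by positivity) (fun n => by positivity)

lemma Ff_eq {k l : ℕ} (hk : 2 ≤ k) (hl : 2 ≤ l) :
    zeta k * zeta l = ∑' p : ℕ × ℕ, Ff k l p := by
  have h3 := summable_Ff hk hl
  unfold Ff at h3 ⊢
  exact Summable.tsum_mul_tsum (summable_zpow hk) (summable_zpow hl) h3

lemma prod_decomp {k l : ℕ} (hk : 2 ≤ k) (hl : 2 ≤ l) :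
    zeta k * zeta l = zeta (k + l) + ((∑' q : ℕ × ℕ, u k l q) + ∑' q : ℕ × ℕ, u l k q) := by
  classical
  have hFs : Summable (Ff k l) := summable_Ff hk hl
  have hzz : zeta k * zeta l = ∑' p : ℕ × ℕ, Ff k l p := Ff_eq hk hl
  set F : ℕ × ℕ → ℝ := Ff k l with hF
  set D : ℕ × ℕ → ℝ := fun p => if p.1 = p.2 then F p else 0 with hD
  set U : ℕ × ℕ → ℝ := fun p => if p.2 < p.1 then F p else 0 with hU
  set L : ℕ × ℕ → ℝ := fun p => if p.1 < p.2 then F p else 0 with hL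
  have hF0 : ∀ p, 0 ≤ F p := fun p => by rw [hF]; unfold Ff; positivity
  have hsplit : ∀ p, F p = D p + U p + L p := by
    intro p
    simp only [hD, hU, hL]
    rcases lt_trichotomy p.1 p.2 with h | h | h
    · rw [if_neg h.ne, if_neg (by omega), if_pos h]; ring
    · rw [if_pos h, if_neg (by omega), if_neg (by omega)]; ring
    · rw [if_neg (by omega), if_pos h, if_neg (by omega)]; ring
  have hDs : Summable D := by
    refine hFs.of_nonneg_of_le (fun p => ?_) (fun p => ?_) <;> simp only [hD] <;> split
    exacts [hF0 p, le_rfl, le_rfl, hF0 p]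
  have hUs : Summable U := by
    refine hFs.of_nonneg_of_le (fun p => ?_) (fun p => ?_) <;> simp only [hU] <;> split
    exacts [hF0 p, le_rfl, le_rfl, hF0 p]
  have hLs : Summable L := by
    refine hFs.of_nonneg_of_le (fun p => ?_) (fun p => ?_) <;> simp only [hL] <;> split
    exacts [hF0 p, le_rfl, le_rfl, hF0 p]
  have hsum : ∑' p : ℕ × ℕ, F p = (∑' p : ℕ × ℕ, D p)
      + ((∑' p : ℕ × ℕ, U p) + ∑' p : ℕ × ℕ, L p) := by
    calc ∑' p : ℕ × ℕ, F p = ∑' p : ℕ × ℕ, (D p + (U p + L p)) := by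
          refine tsum_congr fun p => ?_
          rw [hsplit p]; ring
      _ = _ := by rw [Summable.tsum_add hDs (hUs.add hLs), Summable.tsum_add hUs hLs]
  have hDval : ∑' p : ℕ × ℕ, D p = zeta (k + l) := by
    have hinj : Injective (fun n : ℕ => ((n, n) : ℕ × ℕ)) := by
      intro a b h
      simpa using congrArg Prod.fst h
    have hvan : ∀ p : ℕ × ℕ, p ∉ Set.range (fun n : ℕ => ((n, n) : ℕ × ℕ)) → D p = 0 := by
      intro p hp
      simp only [hD]
      rw [if_neg]
      intro h
      exact hp ⟨p.1, Prod.ext rfl h⟩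
    rw [← hinj.tsum_eq (Function.support_subset_iff'.2 hvan)]
    unfold zeta
    refine tsum_congr fun n => ?_
    simp only [hD, hF, if_pos rfl]
    simp only [Ff]
    rw [div_mul_div_comm, one_mul, ← pow_add]
  have hUval : ∑' p : ℕ × ℕ, U p = ∑' q : ℕ × ℕ, u k l q := by
    have hvan : ∀ p : ℕ × ℕ,
        p ∉ Set.range (fun q : ℕ × ℕ => ((q.1 + q.2 + 1, q.2) : ℕ × ℕ)) → U p = 0 := by
      intro p hp
      simp only [hU]
      rw [if_neg fun h => hp (mem_range1 h)]
    rw [← inj1.tsum_eq (Function.support_subset_iff'.2 hvan)]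
    refine tsum_congr fun q => ?_
    simp only [hU, hF]
    rw [if_pos (show (((q.1 + q.2 + 1 : ℕ), q.2) : ℕ × ℕ).2 < ((q.1 + q.2 + 1, q.2) : ℕ × ℕ).1
      from by simp)]
    simp only [u, Ff]
    rw [div_mul_div_comm, one_mul]
    push_cast
    ring
  have hLval : ∑' p : ℕ × ℕ, L p = ∑' q : ℕ × ℕ, u l k q := by
    have hinj : Injective (fun q : ℕ × ℕ => ((q.2, q.1 + q.2 + 1) : ℕ × ℕ)) := by
      intro a b h
      simp only [Prod.mk.injEq] at h
      exact Prod.ext (by omega) h.1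
    have hvan : ∀ p : ℕ × ℕ,
        p ∉ Set.range (fun q : ℕ × ℕ => ((q.2, q.1 + q.2 + 1) : ℕ × ℕ)) → L p = 0 := by
      intro p hp
      simp only [hL]
      rw [if_neg]
      intro h
      refine hp ⟨(p.2 - p.1 - 1, p.1), Prod.ext rfl ?_⟩
      show p.2 - p.1 - 1 + p.1 + 1 = p.2
      omega
    rw [← hinj.tsum_eq (Function.support_subset_iff'.2 hvan)]
    refine tsum_congr fun q => ?_
    simp only [hL, hF]
    rw [if_pos (show (((q.2 : ℕ), q.1 + q.2 + 1) : ℕ × ℕ).1 < ((q.2, q.1 + q.2 + 1) : ℕ × ℕ).2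
      from by simp)]
    simp only [u, Ff]
    rw [div_mul_div_comm, one_mul]
    push_cast
    ring
  rw [hzz, hsum, hDval, hUval, hLval]

lemma G_eq (s : ℕ) : ∑' p : ℕ × ℕ, G s p = ∑' q : ℕ × ℕ, u s 1 q := by
  have hvan : ∀ p : ℕ × ℕ,
      p ∉ Set.range (fun q : ℕ × ℕ => ((q.1 + q.2 + 1, q.2) : ℕ × ℕ)) → G s p = 0 := by
    intro p hp
    unfold G
    rw [if_neg fun h => hp (mem_range1 h)]
  rw [← inj1.tsum_eq (Function.support_subset_iff'.2 hvan)]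
  refine tsum_congr fun q => ?_
  unfold G
  rw [if_pos (show (((q.1 + q.2 + 1 : ℕ), q.2) : ℕ × ℕ).2 < ((q.1 + q.2 + 1, q.2) : ℕ × ℕ).1
    from by simp)]
  unfold u
  rw [pow_one]
  push_cast
  ring

lemma zeta2_eq {s : ℕ} (hs : 2 ≤ s) : zeta2 s 1 = ∑' q : ℕ × ℕ, u s 1 q := by
  unfold zeta2
  rw [Summable.tsum_prod' (summable_u hs le_rfl) (fun b => (summable_u hs le_rfl).prod_factor b)]
  refine tsum_congr fun i => tsum_congr fun j => ?_
  simp [u]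


lemma alg2 {a b t : ℝ} (ha : 0 < a) (hb : 0 < b) (ht : 0 < t) :
    1/(a*b*t) = 1/(t*(a+b)*b) + 1/(t*(a+b)*a) := by
  field_simp

lemma sum_u_eq {s : ℕ} (hs : 2 ≤ s) (q : ℕ × ℕ) :
    ∑ k ∈ Icc 2 (s-1), u k (s+1-k) q = p1 s q - p2 s q := by
  have h := keyPF (n := (q.2:ℝ)+1) (e := (q.1:ℝ)+1) (one_le_np1 _) (by positivity) s hs
  rw [show ((q.2:ℝ)+1) + ((q.1:ℝ)+1) = (q.1:ℝ)+(q.2:ℝ)+2 from by ring] at h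
  unfold u p1 p2
  exact h

lemma P2_eq {s : ℕ} (hs : 2 ≤ s) :
    ∑' q : ℕ × ℕ, p2 s q = 2 * ∑' q : ℕ × ℕ, u s 1 q := by
  have hswap : Summable (fun c : ℕ × ℕ => u s 1 ((c.2, c.1) : ℕ × ℕ)) :=
    (summable_u hs le_rfl).comp_injective
      (fun a b h => by
        simp only [Prod.mk.injEq] at h
        exact Prod.ext h.2 h.1)
  have hpt : ∀ q : ℕ × ℕ, p2 s q = u s 1 q + u s 1 ((q.2, q.1) : ℕ × ℕ) := by
    intro q
    unfold p2 u
    simp only [pow_one]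
    rw [show (q.2:ℝ)+(q.1:ℝ)+2 = (q.1:ℝ)+(q.2:ℝ)+2 from by ring,
      show ((q.1:ℝ)+(q.2:ℝ)+2)^s = ((q.1:ℝ)+(q.2:ℝ)+2)^(s-1) * ((q.1:ℝ)+(q.2:ℝ)+2) from by
        rw [← pow_succ]; congr 1; omega,
      show (q.1:ℝ)+(q.2:ℝ)+2 = ((q.1:ℝ)+1)+((q.2:ℝ)+1) from by ring]
    exact alg2 (by positivity) (by positivity) (by positivity)
  rw [tsum_congr hpt, Summable.tsum_add (summable_u hs le_rfl) hswap]
  have heq : ∑' c : ℕ × ℕ, u s 1 ((c.2, c.1) : ℕ × ℕ) = ∑' q : ℕ × ℕ, u s 1 q := by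
    have h := (Equiv.prodComm ℕ ℕ).tsum_eq (u s 1)
    exact h
  rw [heq]
  ring

lemma G_nonneg (s : ℕ) (p : ℕ × ℕ) : 0 ≤ G s p := by
  unfold G
  split
  · positivity
  · exact le_rfl

lemma P1_eq {s : ℕ} (hs : 2 ≤ s) :
    ∑' q : ℕ × ℕ, p1 s q = (∑' p : ℕ × ℕ, G s p) + zeta (s+1) := by
  have hG : Summable (G s) := summable_G hs
  have hp1 : Summable (p1 s) := summable_p1 hs
  have hswap : Summable (fun c : ℕ × ℕ => p1 s ((c.2, c.1) : ℕ × ℕ)) :=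
    hp1.comp_injective
      (fun a b h => by
        simp only [Prod.mk.injEq] at h
        exact Prod.ext h.2 h.1)
  have e0 : ∑' q : ℕ × ℕ, p1 s q = ∑' c : ℕ × ℕ, p1 s ((c.2, c.1) : ℕ × ℕ) :=
    ((Equiv.prodComm ℕ ℕ).tsum_eq (p1 s)).symm
  rw [e0, Summable.tsum_prod' hswap (fun n => hswap.prod_factor n)]
  have inner : ∀ n : ℕ, ∑' d : ℕ, p1 s ((d, n) : ℕ × ℕ)
      = (∑' t : ℕ, G s ((n, t) : ℕ × ℕ)) + 1/((n:ℝ)+1)^(s+1) := by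
    intro n
    have hpt : ∀ d : ℕ, p1 s ((d, n) : ℕ × ℕ)
        = (1/((n:ℝ)+1)^s) * (1/((d:ℝ)+1) - 1/((n:ℝ)+(d:ℝ)+2)) := by
      intro d
      unfold p1
      rw [show ((n:ℝ)+1)^s = ((n:ℝ)+1)^(s-1) * ((n:ℝ)+1) from by
        rw [← pow_succ]; congr 1; omega]
      have h1 : (0:ℝ) < (d:ℝ)+1 := by positivity
      have h2 : (0:ℝ) < (n:ℝ)+(d:ℝ)+2 := by positivity
      have h3 : (0:ℝ) < (n:ℝ)+1 := by positivity
      field_simp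
      ring
    rw [tsum_congr hpt, tsum_mul_left, tele2 n, Finset.mul_sum, Finset.sum_range_succ]
    congr 1
    · rw [tsum_eq_sum (s := range n)
        (f := fun t => G s ((n, t) : ℕ × ℕ))
        (fun t ht => by
          have h' : ¬ t < n := by simpa using ht
          simp [G, h'])]
      refine Finset.sum_congr rfl fun t ht => ?_
      unfold G
      rw [if_pos (show ((n, t) : ℕ × ℕ).2 < ((n, t) : ℕ × ℕ).1 from mem_range.mp ht)]
      rw [mul_one_div, div_div]
    · rw [pow_succ, mul_one_div, div_div]
  rw [tsum_congr inner, Summable.tsum_add hG.prod (summable_zpow (by omega))]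
  congr 1
  · exact (Summable.tsum_prod' hG (fun n => hG.prod_factor n)).symm

lemma main_sum {s : ℕ} (hs : 2 ≤ s) :
    ∑ k ∈ Icc 2 (s-1), zeta k * zeta (s+1-k)
      = ((s:ℝ)-2) * zeta (s+1)
        + 2 * ((∑' q : ℕ × ℕ, p1 s q) - ∑' q : ℕ × ℕ, p2 s q) := by
  have hstep : ∀ k ∈ Icc 2 (s-1), zeta k * zeta (s+1-k)
      = zeta (s+1) + ((∑' q : ℕ × ℕ, u k (s+1-k) q) + ∑' q : ℕ × ℕ, u (s+1-k) k q) := by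
    intro k hk
    obtain ⟨hk1, hk2⟩ := Finset.mem_Icc.mp hk
    have h1 : 2 ≤ s+1-k := by omega
    have h := prod_decomp hk1 h1
    rw [show k + (s+1-k) = s+1 from by omega] at h
    exact h
  have husum : ∀ k ∈ Icc 2 (s-1), Summable (u k (s+1-k)) := by
    intro k hk
    obtain ⟨hk1, hk2⟩ := Finset.mem_Icc.mp hk
    exact summable_u hk1 (by omega)
  have hmain : ∑ k ∈ Icc 2 (s-1), ∑' q : ℕ × ℕ, u k (s+1-k) q
      = (∑' q : ℕ × ℕ, p1 s q) - ∑' q : ℕ × ℕ, p2 s q := by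
    calc ∑ k ∈ Icc 2 (s-1), ∑' q : ℕ × ℕ, u k (s+1-k) q
        = ∑' q : ℕ × ℕ, ∑ k ∈ Icc 2 (s-1), u k (s+1-k) q := (Summable.tsum_finsetSum husum).symm
      _ = ∑' q : ℕ × ℕ, (p1 s q - p2 s q) := tsum_congr (sum_u_eq hs)
      _ = _ := Summable.tsum_sub (summable_p1 hs) (summable_p2 hs)
  have hrefl : ∑ k ∈ Icc 2 (s-1), ∑' q : ℕ × ℕ, u (s+1-k) k q
      = ∑ k ∈ Icc 2 (s-1), ∑' q : ℕ × ℕ, u k (s+1-k) q := by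
    refine Finset.sum_nbij' (i := fun k => s+1-k) (j := fun k => s+1-k) ?_ ?_ ?_ ?_ ?_
    · intro a ha
      obtain ⟨h1, h2⟩ := Finset.mem_Icc.mp ha
      show s+1-a ∈ Icc 2 (s-1)
      exact Finset.mem_Icc.mpr ⟨by omega, by omega⟩
    · intro a ha
      obtain ⟨h1, h2⟩ := Finset.mem_Icc.mp ha
      show s+1-a ∈ Icc 2 (s-1)
      exact Finset.mem_Icc.mpr ⟨by omega, by omega⟩
    · intro a ha
      obtain ⟨h1, h2⟩ := Finset.mem_Icc.mp ha
      show s+1-(s+1-a) = a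
      omega
    · intro a ha
      obtain ⟨h1, h2⟩ := Finset.mem_Icc.mp ha
      show s+1-(s+1-a) = a
      omega
    · intro a ha
      obtain ⟨h1, h2⟩ := Finset.mem_Icc.mp ha
      show ∑' q : ℕ × ℕ, u (s+1-a) a q = ∑' q : ℕ × ℕ, u (s+1-a) (s+1-(s+1-a)) q
      rw [show s+1-(s+1-a) = a from by omega]
  calc ∑ k ∈ Icc 2 (s-1), zeta k * zeta (s+1-k)
      = ∑ k ∈ Icc 2 (s-1), (zeta (s+1)
          + ((∑' q : ℕ × ℕ, u k (s+1-k) q) + ∑' q : ℕ × ℕ, u (s+1-k) k q)) :=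
        Finset.sum_congr rfl hstep
    _ = (∑ _k ∈ Icc 2 (s-1), zeta (s+1))
        + ((∑ k ∈ Icc 2 (s-1), ∑' q : ℕ × ℕ, u k (s+1-k) q)
          + ∑ k ∈ Icc 2 (s-1), ∑' q : ℕ × ℕ, u (s+1-k) k q) := by
        rw [Finset.sum_add_distrib, Finset.sum_add_distrib]
    _ = ((s:ℝ)-2) * zeta (s+1)
        + 2 * ((∑' q : ℕ × ℕ, p1 s q) - ∑' q : ℕ × ℕ, p2 s q) := by
        rw [hrefl, hmain, Finset.sum_const, Nat.card_Icc,
          show s-1+1-2 = s-2 from by omega, nsmul_eq_mul,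
          show ((s-2 : ℕ) : ℝ) = (s:ℝ)-2 from by
            rw [Nat.cast_sub hs]; norm_num]
        ring

end E11

theorem stmt11 (s : ℕ) (hs : 1 < s) :
    zeta2 s 1 = (s : ℝ) / 2 * zeta (s + 1)
      - 1 / 2 * ∑ k ∈ Finset.Icc 2 (s - 1), zeta k * zeta (s + 1 - k) := by
  have hs2 : 2 ≤ s := hs
  have hz2 : zeta2 s 1 = ∑' q : ℕ × ℕ, E11.u s 1 q := E11.zeta2_eq hs2
  have hS := E11.main_sum hs2
  have hP1 := E11.P1_eq (s := s) hs2
  have hP2 := E11.P2_eq (s := s) hs2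
  have hGA := E11.G_eq s
  rw [hS, hz2, hP1, hP2, hGA]
  ring
end
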